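/- Let n ≥ 1, let K ⊆ ℤ_+^n be a finite set, let H be a finite-dimensional complex inner product space, let x : K → H be a family of vectors, and let s : ℤ_+^n → ℝ satisfy ⟨x(k), x(m)⟩ = s(k + m) for all k, m ∈ K. Let Ω_0 = {k ∈ K : k + e_l ∈ K for all l = 1,…,n}, and suppose the vectors {x(k) : k ∈ Ω_0} span H (dimensional stability). Suppose moreover that for each l ∈ {1,…,n} there is a linear operator M_l : H → H with M_l x(k) = x(k + e_l) for every k ∈ K with k + e_l ∈ K. Then each M_l is self-adjoint and M_a M_b = M_b M_a for all a, b ∈ {1,…,n}. -/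

import Mathlib

open scoped ComplexInnerProductSpace

private lemma aux_eq_zero_of_inner {H : Type*} [NormedAddCommGroup H]
    [InnerProductSpace ℂ H] (S : Set H) (hspan : Submodule.span ℂ S = ⊤) (w : H)
    (h : ∀ u ∈ S, ⟪w, u⟫ = 0) : w = 0 := by
  have h' : (innerSL ℂ w).toLinearMap = (0 : H →ₗ[ℂ] ℂ) :=
    LinearMap.ext_on hspan (fun u hu => by simpa using h u hu)
  have := LinearMap.congr_fun h' w
  simpa [inner_self_eq_zero] using this

/-- Theorem 1 (operator-theoretic content): if the Gram structure of the vectors `x k`, `k ∈ K`,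
is given by real moments `s`, the interior vectors `{x k : k ∈ Ω₀}` span `H` (dimensional
stability), and the multiplication operators `M l` satisfy `M l (x k) = x (k + e_l)` whenever
`k, k + e_l ∈ K`, then every `M l` is self-adjoint and the `M l` pairwise commute. -/
theorem dimensional_stability_implies_complete_selfadjointness
    (n : ℕ) (hn : 1 ≤ n) (K : Set (Fin n → ℕ)) (hKfin : K.Finite)
    (H : Type*) [NormedAddCommGroup H] [InnerProductSpace ℂ H] [FiniteDimensional ℂ H]
    (x : (Fin n → ℕ) → H) (s : (Fin n → ℕ) → ℝ)
    (hs : ∀ k ∈ K, ∀ m ∈ K, ⟪x k, x m⟫ = ((s (k + m) : ℝ) : ℂ))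
    (hspan : Submodule.span ℂ
      (x '' {k ∈ K | ∀ l : Fin n, k + Pi.single l 1 ∈ K}) = ⊤)
    (M : Fin n → (H →ₗ[ℂ] H))
    (hM : ∀ l : Fin n, ∀ k ∈ K, k + Pi.single l 1 ∈ K →
      M l (x k) = x (k + Pi.single l 1)) :
    (∀ l : Fin n, ∀ u v : H, ⟪M l u, v⟫ = ⟪u, M l v⟫) ∧
    (∀ a b : Fin n, M a ∘ₗ M b = M b ∘ₗ M a) := by
  have hsa : ∀ l : Fin n, ∀ u v : H, ⟪M l u, v⟫ = ⟪u, M l v⟫ := by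
    intro l
    have hadj : LinearMap.adjoint (M l) = M l := by
      apply LinearMap.ext_on hspan
      rintro _ ⟨m, ⟨hmK, hmΩ⟩, rfl⟩
      rw [← sub_eq_zero]
      apply aux_eq_zero_of_inner _ hspan
      rintro _ ⟨k, ⟨hkK, hkΩ⟩, rfl⟩
      rw [inner_sub_left, LinearMap.adjoint_inner_left, hM l k hkK (hkΩ l),
        hM l m hmK (hmΩ l), hs m hmK _ (hkΩ l), hs _ (hmΩ l) k hkK, sub_eq_zero]
      norm_cast
      congr 1
      ring
    intro u v
    conv_lhs => rw [← hadj]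
    exact LinearMap.adjoint_inner_left _ _ _
  refine ⟨hsa, ?_⟩
  intro a b
  apply LinearMap.ext_on hspan
  rintro _ ⟨k, ⟨hkK, hkΩ⟩, rfl⟩
  simp only [LinearMap.comp_apply]
  rw [← sub_eq_zero]
  apply aux_eq_zero_of_inner _ hspan
  rintro _ ⟨m, ⟨hmK, hmΩ⟩, rfl⟩
  rw [inner_sub_left, hsa a ((M b) (x k)) (x m), hsa b ((M a) (x k)) (x m),
    hM b k hkK (hkΩ b), hM a k hkK (hkΩ a),
    hM a m hmK (hmΩ a), hM b m hmK (hmΩ b),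
    hs _ (hkΩ b) _ (hmΩ a), hs _ (hkΩ a) _ (hmΩ b), sub_eq_zero]
  norm_cast
  congr 1
  ring
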